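/- Let k > 0, γ > 0, t ≥ 0, set τ := exp(-k·t)·sinh(k·t)/k, and let μ := gaussianReal 0 (γ²·τ). Then for every real S₀, ∫ (cos²(x) + S₀²·sin²(x)) dμ(x) = (1/2)·(1 + S₀²) + (1/2)·(1 - S₀²)·exp(-2·γ²·τ). -/

import Mathlib

open ProbabilityTheory MeasureTheory Real Complex
open scoped NNReal ENNReal

lemma cos_gauss_integral (v : ℝ) (hv : 0 < v) :
    ∫ x : ℝ, Real.cos (2 * x) * Real.exp (-x ^ 2 / (2 * v)) =
      Real.sqrt (2 * π * v) * Real.exp (-(2 * v)) := by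
  have hb : (0 : ℝ) < 1 / (2 * v) := by positivity
  have hbC : (0 : ℝ) < ((1 / (2 * v) : ℝ) : ℂ).re := by simpa using hb
  have h := fourierIntegral_gaussian (b := ((1 / (2 * v) : ℝ) : ℂ)) hbC (2 : ℂ)
  have hint : Integrable (fun x : ℝ => Complex.exp (Complex.I * 2 * x) *
      Complex.exp (-((1 / (2 * v) : ℝ) : ℂ) * x ^ 2)) := by
    have := integrable_cexp_quadratic (b := ((1 / (2 * v) : ℝ) : ℂ)) hbC (2 * Complex.I) 0
    refine this.congr (Filter.Eventually.of_forall fun x => ?_)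
    simp only [← Complex.exp_add]
    ring_nf
  have hre : ∀ x : ℝ, (Complex.exp (Complex.I * 2 * x) *
      Complex.exp (-((1 / (2 * v) : ℝ) : ℂ) * x ^ 2)).re
      = Real.cos (2 * x) * Real.exp (-x ^ 2 / (2 * v)) := by
    intro x
    have key : Complex.exp (Complex.I * 2 * x) * Complex.exp (-((1 / (2 * v) : ℝ) : ℂ) * x ^ 2)
        = ((Real.exp (-x ^ 2 / (2 * v)) : ℝ) : ℂ) * Complex.exp (((2 * x : ℝ) : ℂ) * Complex.I) := by
      rw [Complex.ofReal_exp, ← Complex.exp_add, ← Complex.exp_add]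
      congr 1
      push_cast
      ring
    rw [key, Complex.mul_re, Complex.ofReal_re, Complex.ofReal_im,
      Complex.exp_ofReal_mul_I_re]
    ring
  have hL : (∫ x : ℝ, Complex.exp (Complex.I * 2 * x) *
      Complex.exp (-((1 / (2 * v) : ℝ) : ℂ) * x ^ 2)).re
      = ∫ x : ℝ, Real.cos (2 * x) * Real.exp (-x ^ 2 / (2 * v)) := by
    rw [← RCLike.re_eq_complex_re, ← integral_re hint]
    refine integral_congr_ae (Filter.Eventually.of_forall fun x => ?_)
    rw [RCLike.re_eq_complex_re]
    exact hre x
  rw [← hL, h]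
  have hπb : ((π : ℂ) / ((1 / (2 * v) : ℝ) : ℂ)) = ((2 * π * v : ℝ) : ℂ) := by
    push_cast
    field_simp
  have hexp : (-(2 : ℂ) ^ 2 / (4 * ((1 / (2 * v) : ℝ) : ℂ))) = ((-(2 * v) : ℝ) : ℂ) := by
    push_cast
    field_simp
    ring
  rw [hπb, hexp, ← Complex.ofReal_exp]
  have hpow : ((2 * π * v : ℝ) : ℂ) ^ (1 / 2 : ℂ) = ((Real.sqrt (2 * π * v) : ℝ) : ℂ) := by
    rw [show ((1 / 2 : ℂ)) = ((1 / 2 : ℝ) : ℂ) by norm_num,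
      ← Complex.ofReal_cpow (by positivity), Real.sqrt_eq_rpow]
  rw [hpow, ← Complex.ofReal_mul, Complex.ofReal_re]

lemma integral_cos_two_mul_gaussianReal (v : ℝ≥0) :
    ∫ x, Real.cos (2 * x) ∂(gaussianReal 0 v) = Real.exp (-(2 * v)) := by
  by_cases hv : v = 0
  · subst hv
    rw [gaussianReal_zero_var]
    simp
  · have hv' : (0 : ℝ) < v := lt_of_le_of_ne v.coe_nonneg (by exact_mod_cast (Ne.symm hv))
    rw [gaussianReal_of_var_ne_zero 0 hv, gaussianPDF_def]
    rw [show (fun x => ENNReal.ofReal (gaussianPDFReal 0 v x)) =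
      (fun x => ((Real.toNNReal (gaussianPDFReal 0 v x) : ℝ≥0) : ℝ≥0∞)) from rfl]
    rw [integral_withDensity_eq_integral_smul
      ((measurable_gaussianPDFReal 0 v).real_toNNReal) _]
    have heq : ∀ x : ℝ, (Real.toNNReal (gaussianPDFReal 0 v x)) • Real.cos (2 * x)
        = (Real.sqrt (2 * π * v))⁻¹ * (Real.cos (2 * x) * Real.exp (-x ^ 2 / (2 * v))) := by
      intro x
      rw [NNReal.smul_def, Real.coe_toNNReal _ (gaussianPDFReal_nonneg 0 v x), smul_eq_mul]
      unfold gaussianPDFReal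
      ring_nf
    rw [integral_congr_ae (Filter.Eventually.of_forall heq), integral_const_mul,
      cos_gauss_integral v hv']
    have hs : Real.sqrt (2 * π * v) ≠ 0 := by positivity
    field_simp

lemma key_integral (v : ℝ≥0) (S₀ : ℝ) :
    ∫ x, (Real.cos x ^ 2 + S₀ ^ 2 * Real.sin x ^ 2) ∂(gaussianReal 0 v) =
      (1 / 2) * (1 + S₀ ^ 2) + (1 / 2) * (1 - S₀ ^ 2) * Real.exp (-(2 * v)) := by
  have hpt : ∀ x : ℝ, Real.cos x ^ 2 + S₀ ^ 2 * Real.sin x ^ 2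
      = (1 / 2) * (1 + S₀ ^ 2) + ((1 / 2) * (1 - S₀ ^ 2)) * Real.cos (2 * x) := by
    intro x
    rw [Real.cos_sq, Real.sin_sq, Real.cos_sq]
    ring
  rw [integral_congr_ae (Filter.Eventually.of_forall hpt)]
  have hcos : Integrable (fun x => Real.cos (2 * x)) (gaussianReal 0 v) := by
    refine Integrable.mono' (integrable_const 1) ?_ (Filter.Eventually.of_forall fun x => ?_)
    · exact (Real.continuous_cos.comp (continuous_const.mul continuous_id)).aestronglyMeasurable
    · simp [Real.norm_eq_abs, Real.abs_cos_le_one]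
  rw [integral_add (integrable_const _) (hcos.const_mul _), integral_const, integral_const_mul,
    integral_cos_two_mul_gaussianReal]
  simp

theorem pauli_fidelity_mean_OU_calibrated (k γ t : ℝ) (hk : 0 < k) (hγ : 0 < γ)
    (ht : 0 ≤ t)
    (τ : ℝ) (hτ : τ = Real.exp (-k * t) * Real.sinh (k * t) / k)
    (μ : Measure ℝ) (hμ : μ = gaussianReal 0 (Real.toNNReal (γ ^ 2 * τ)))
    (S₀ : ℝ) :
    ∫ x, (Real.cos x ^ 2 + S₀ ^ 2 * Real.sin x ^ 2) ∂μ =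
      (1 / 2) * (1 + S₀ ^ 2) + (1 / 2) * (1 - S₀ ^ 2) * Real.exp (-2 * γ ^ 2 * τ) := by
  have hτ0 : 0 ≤ τ := by
    rw [hτ]
    have h1 : 0 ≤ Real.sinh (k * t) := Real.sinh_nonneg_iff.mpr (by positivity)
    positivity
  have hcoe : ((Real.toNNReal (γ ^ 2 * τ) : ℝ≥0) : ℝ) = γ ^ 2 * τ :=
    Real.coe_toNNReal _ (by positivity)
  rw [hμ, key_integral, hcoe]
  ring_nf
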